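/- Suppose the external field vanishes, h_v = 0 for all v ∈ V, and let f ∈ F_q (membership in F_q^0 is not required). Then for every R ⊆ V the Potts mean ⟨f(σ)^R⟩ is real and nonnegative, is non-decreasing in the coupling vector J, and for all R, S ⊆ V one has ⟨f(σ)^R f(σ)^S⟩ ≥ ⟨f(σ)^R⟩ · ⟨f(σ)^S⟩. -/

import Mathlib

open Finset

noncomputable section

variable {V : Type*} [Fintype V] [DecidableEq V]

/-- Kronecker delta `δ_{σ_x,σ_y}` for an unordered edge. -/
def edgeDelta {q : ℕ} (σ : V → Fin q) : Sym2 V → ℝ :=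
  Sym2.lift ⟨fun x y => if σ x = σ y then 1 else 0,
    fun x y => by simp [eq_comm]⟩

/-- Boltzmann weight of a spin configuration for the `q`-state Potts model with
couplings `J` on the edge set `E` and external field `h`. -/
def pottsWeight (q : ℕ) [NeZero q] (E : Finset (Sym2 V)) (J : Sym2 V → ℝ)
    (h : V → ℝ) (σ : V → Fin q) : ℝ :=
  Real.exp ((∑ e ∈ E, J e * edgeDelta σ e) +
    ∑ v : V, h v * (if σ v = 0 then 1 else 0))

/-- The partition function `Z`. -/
def pottsZ (q : ℕ) [NeZero q] (E : Finset (Sym2 V)) (J : Sym2 V → ℝ) (h : V → ℝ) : ℝ :=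
  ∑ σ : V → Fin q, pottsWeight q E J h σ

/-- The Potts probability measure `π`. -/
def pottsPMF (q : ℕ) [NeZero q] (E : Finset (Sym2 V)) (J : Sym2 V → ℝ) (h : V → ℝ)
    (σ : V → Fin q) : ℝ :=
  pottsWeight q E J h σ / pottsZ q E J h

/-- The mean `⟨f(σ)^R⟩ = Σ_σ π(σ) Π_{v ∈ R} f(σ_v)`. -/
def pottsMean (q : ℕ) [NeZero q] (E : Finset (Sym2 V)) (J : Sym2 V → ℝ) (h : V → ℝ)
    (f : Fin q → ℂ) (R : Finset V) : ℂ :=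
  ∑ σ : V → Fin q, (pottsPMF q E J h σ : ℂ) * ∏ v ∈ R, f (σ v)

/-- The mean `⟨f₀(σ)^R f₁(σ)^S⟩`. -/
def pottsMean2 (q : ℕ) [NeZero q] (E : Finset (Sym2 V)) (J : Sym2 V → ℝ) (h : V → ℝ)
    (f₀ f₁ : Fin q → ℂ) (R S : Finset V) : ℂ :=
  ∑ σ : V → Fin q, (pottsPMF q E J h σ : ℂ) *
    ((∏ v ∈ R, f₀ (σ v)) * ∏ v ∈ S, f₁ (σ v))

/-- `E(f(X)^m)` where `X` is uniformly distributed on `Fin q`. -/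
def powerMean (q : ℕ) (f : Fin q → ℂ) (m : ℕ) : ℂ :=
  (∑ x : Fin q, f x ^ m) / q

/-- The class `F_q`: all `f : Fin q → ℂ` such that every `E(f(X)^m)` is real and
nonnegative and `E(f(X)^{m+n}) ≥ E(f(X)^m)·E(f(X)^n)`. -/
def memF (q : ℕ) (f : Fin q → ℂ) : Prop :=
  (∀ m : ℕ, (powerMean q f m).im = 0 ∧ 0 ≤ (powerMean q f m).re) ∧
  ∀ m n : ℕ, (powerMean q f m).re * (powerMean q f n).re ≤ (powerMean q f (m + n)).re

/-- The class `F_q^0`: members of `F_q` with `f(0) = max{|f(x)| : x ∈ Q}`. -/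
def memF0 (q : ℕ) [NeZero q] (f : Fin q → ℂ) : Prop :=
  memF q f ∧ f 0 = (‖f 0‖ : ℂ) ∧
    ∀ x : Fin q, ‖f x‖ ≤ ‖f 0‖


-- ### Auxiliary machinery
set_option linter.unusedSectionVars false
set_option linter.unusedVariables false

abbrev gph (A : Finset (Sym2 V)) : SimpleGraph V := SimpleGraph.fromEdgeSet (A : Set (Sym2 V))
abbrev comps (A : Finset (Sym2 V)) := (gph A).ConnectedComponent
noncomputable instance (A : Finset (Sym2 V)) : Fintype (comps A) := Fintype.ofFinite _
noncomputable def cmk (A : Finset (Sym2 V)) (v : V) : comps A := (gph A).connectedComponentMk v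
lemma cmk_out (A : Finset (Sym2 V)) (C : comps A) : cmk A C.out = C := C.out_eq

lemma cmk_eq_of_mem {A : Finset (Sym2 V)} {v w : V} (h : s(v,w) ∈ A) : cmk A v = cmk A w := by
  rcases eq_or_ne v w with rfl | hne
  · rfl
  · exact SimpleGraph.ConnectedComponent.connectedComponentMk_eq_of_adj
      (by rw [SimpleGraph.fromEdgeSet_adj]; exact ⟨by exact_mod_cast h, hne⟩)

lemma compat_of_cmk_eq {A : Finset (Sym2 V)} {q : ℕ} {σ : V → Fin q}
    (h : ∀ v w : V, s(v,w) ∈ A → σ v = σ w)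
    {v w : V} (hvw : cmk A v = cmk A w) : σ v = σ w := by
  have hr : (gph A).Reachable v w := SimpleGraph.ConnectedComponent.exact hvw
  rw [SimpleGraph.reachable_iff_reflTransGen] at hr
  clear hvw
  induction hr with
  | refl => rfl
  | tail _hbc hadj ih =>
      rw [SimpleGraph.fromEdgeSet_adj] at hadj
      exact ih.trans (h _ _ (by exact_mod_cast hadj.1))
noncomputable def compMap {A B : Finset (Sym2 V)} (h : A ⊆ B) : comps A → comps B :=
  SimpleGraph.ConnectedComponent.map
    (SimpleGraph.Hom.ofLE (SimpleGraph.fromEdgeSet_mono (by exact_mod_cast h)))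
lemma compMap_cmk {A B : Finset (Sym2 V)} (h : A ⊆ B) (v : V) :
    compMap h (cmk A v) = cmk B v := rfl
lemma compMap_surjective {A B : Finset (Sym2 V)} (h : A ⊆ B) :
    Function.Surjective (compMap h) := by
  intro C; refine C.ind fun v => ⟨cmk A v, rfl⟩

/-- number of connected components -/
noncomputable def kk (A : Finset (Sym2 V)) : ℕ := Fintype.card (comps A)

lemma kk_mono {A B : Finset (Sym2 V)} (h : A ⊆ B) : kk B ≤ kk A :=
  Fintype.card_le_of_surjective _ (compMap_surjective h)

lemma gph_insert_diag {e : Sym2 V} (he : e.IsDiag) (A : Finset (Sym2 V)) :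
    gph (insert e A) = gph A := by
  induction e using Sym2.ind with
  | _ a b =>
    rw [Sym2.mk_isDiag_iff] at he
    subst he
    ext v w
    simp only [SimpleGraph.fromEdgeSet_adj, Finset.coe_insert, Set.mem_insert_iff,
      Finset.mem_coe]
    constructor
    · rintro ⟨h1 | h1, h2⟩
      · rw [Sym2.eq_iff] at h1
        rcases h1 with ⟨rfl, rfl⟩ | ⟨rfl, rfl⟩ <;> exact absurd rfl h2
      · exact ⟨h1, h2⟩
    · rintro ⟨h1, h2⟩; exact ⟨Or.inr h1, h2⟩

/-- reachability in `insert e A` when the endpoints of `e` are already connected. -/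
lemma reach_insert_of_reach {A : Finset (Sym2 V)} {x y : V} (hxy : (gph A).Reachable x y)
    {v w : V} (h : (gph (insert s(x,y) A)).Reachable v w) : (gph A).Reachable v w := by
  rw [SimpleGraph.reachable_iff_reflTransGen] at h
  induction h with
  | refl => rfl
  | tail _hbc hadj ih =>
      refine ih.trans ?_
      rw [SimpleGraph.fromEdgeSet_adj] at hadj
      obtain ⟨hmem, hne⟩ := hadj
      rw [Finset.coe_insert, Set.mem_insert_iff] at hmem
      rcases hmem with hmem | hmem
      · rw [Sym2.eq_iff] at hmem
        rcases hmem with ⟨rfl, rfl⟩ | ⟨rfl, rfl⟩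
        · exact hxy
        · exact hxy.symm
      · exact SimpleGraph.Adj.reachable (by rw [SimpleGraph.fromEdgeSet_adj]; exact ⟨hmem, hne⟩)

lemma kk_insert_of_reach {A : Finset (Sym2 V)} {x y : V} (hxy : (gph A).Reachable x y) :
    kk (insert s(x,y) A) = kk A := by
  have hsub : A ⊆ insert s(x,y) A := Finset.subset_insert _ _
  refine le_antisymm (kk_mono hsub) (Fintype.card_le_of_injective (compMap hsub) ?_)
  intro C C' hCC'
  have h1 : cmk (insert s(x,y) A) C.out = cmk (insert s(x,y) A) C'.out := by
    rw [← compMap_cmk hsub, ← compMap_cmk hsub, cmk_out, cmk_out, hCC']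
  have h2 : (gph (insert s(x,y) A)).Reachable C.out C'.out :=
    SimpleGraph.ConnectedComponent.exact h1
  have := reach_insert_of_reach hxy h2
  rw [← cmk_out _ C, ← cmk_out _ C']
  exact SimpleGraph.ConnectedComponent.sound this

lemma reach_insert_dichotomy {A : Finset (Sym2 V)} {x y : V} {v w : V}
    (h : (gph (insert s(x,y) A)).Reachable v w) :
    cmk A v = cmk A w ∨
      ((cmk A v = cmk A x ∨ cmk A v = cmk A y) ∧ (cmk A w = cmk A x ∨ cmk A w = cmk A y)) := by
  rw [SimpleGraph.reachable_iff_reflTransGen] at h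
  induction h with
  | refl => exact Or.inl rfl
  | @tail b c _hbc hadj ih =>
      rw [SimpleGraph.fromEdgeSet_adj] at hadj
      obtain ⟨hmem, hne⟩ := hadj
      rw [Finset.coe_insert, Set.mem_insert_iff] at hmem
      rcases hmem with hmem | hmem
      · rw [Sym2.eq_iff] at hmem
        have hb : cmk A b = cmk A x ∨ cmk A b = cmk A y := by
          rcases hmem with ⟨rfl, rfl⟩ | ⟨rfl, rfl⟩
          · exact Or.inl rfl
          · exact Or.inr rfl
        have hc : cmk A c = cmk A x ∨ cmk A c = cmk A y := by
          rcases hmem with ⟨rfl, rfl⟩ | ⟨rfl, rfl⟩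
          · exact Or.inr rfl
          · exact Or.inl rfl
        rcases ih with ih | ih
        · exact Or.inr ⟨ih ▸ hb, hc⟩
        · exact Or.inr ⟨ih.1, hc⟩
      · have hbc : cmk A b = cmk A c :=
          SimpleGraph.ConnectedComponent.connectedComponentMk_eq_of_adj
            (by rw [SimpleGraph.fromEdgeSet_adj]; exact ⟨hmem, hne⟩)
        rcases ih with ih | ih
        · exact Or.inl (ih.trans hbc)
        · exact Or.inr ⟨ih.1, hbc ▸ ih.2⟩

lemma kk_le_insert (A : Finset (Sym2 V)) (e : Sym2 V) : kk A ≤ kk (insert e A) + 1 := by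
  induction e using Sym2.ind with
  | _ x y =>
    classical
    set A' := insert s(x,y) A with hA'
    have hsub : A ⊆ A' := Finset.subset_insert _ _
    have hinj : Set.InjOn (compMap hsub) ((Finset.univ.erase (cmk A x) : Finset (comps A)) : Set (comps A)) := by
      intro C hC C' hC' hCC'
      simp only [Finset.coe_erase, Set.mem_diff] at hC hC'
      have h1 : cmk A' C.out = cmk A' C'.out := by
        rw [← compMap_cmk hsub, ← compMap_cmk hsub, cmk_out, cmk_out, hCC']
      have h2 := reach_insert_dichotomy (A := A) (x := x) (y := y)
        (SimpleGraph.ConnectedComponent.exact h1)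
      rw [cmk_out, cmk_out] at h2
      rcases h2 with h2 | ⟨hv, hw⟩
      · exact h2
      · have hCx : C ≠ cmk A x := by simpa using hC.2
        have hC'x : C' ≠ cmk A x := by simpa using hC'.2
        rcases hv with hv | hv
        · exact absurd hv hCx
        · rcases hw with hw | hw
          · exact absurd hw hC'x
          · rw [hv, hw]
    have hcard := Finset.card_le_card_of_injOn _ (fun C _ => Finset.mem_univ _) hinj
    have h1 : (Finset.univ.erase (cmk A x)).card = kk A - 1 := by
      rw [Finset.card_erase_of_mem (Finset.mem_univ _), Finset.card_univ]; rfl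
    have h2 : (Finset.univ : Finset (comps A')).card = kk A' := Finset.card_univ
    rw [h1, h2] at hcard
    omega

lemma kk_insert_lt {A : Finset (Sym2 V)} {x y : V} (hne : x ≠ y)
    (hnr : ¬ (gph A).Reachable x y) : kk (insert s(x,y) A) < kk A := by
  have hsub : A ⊆ insert s(x,y) A := Finset.subset_insert _ _
  refine Fintype.card_lt_of_surjective_not_injective _ (compMap_surjective hsub) ?_
  intro hinj
  have : compMap hsub (cmk A x) = compMap hsub (cmk A y) := by
    rw [compMap_cmk, compMap_cmk]
    exact SimpleGraph.ConnectedComponent.connectedComponentMk_eq_of_adj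
      (by rw [SimpleGraph.fromEdgeSet_adj]
          exact ⟨by simp, hne⟩)
  exact hnr (SimpleGraph.ConnectedComponent.exact (hinj this))

lemma kk_step {X Y : Finset (Sym2 V)} (hXY : X ⊆ Y) (e : Sym2 V) :
    kk Y + kk (insert e X) ≤ kk X + kk (insert e Y) := by
  by_cases hd : e.IsDiag
  · have h1 : kk (insert e X) = kk X :=
      Fintype.card_congr' (congrArg SimpleGraph.ConnectedComponent (gph_insert_diag hd X))
    have h2 : kk (insert e Y) = kk Y :=
      Fintype.card_congr' (congrArg SimpleGraph.ConnectedComponent (gph_insert_diag hd Y))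
    omega
  · induction e using Sym2.ind with
    | _ x y =>
      have hne : x ≠ y := by simpa [Sym2.mk_isDiag_iff] using hd
      by_cases hr : (gph X).Reachable x y
      · have h1 : kk (insert s(x,y) X) = kk X := kk_insert_of_reach hr
        have h2 : kk (insert s(x,y) Y) = kk Y :=
          kk_insert_of_reach (hr.mono (SimpleGraph.fromEdgeSet_mono (by exact_mod_cast hXY)))
        omega
      · have h1 : kk (insert s(x,y) X) < kk X := kk_insert_lt hne hr
        have h2 : kk Y ≤ kk (insert s(x,y) Y) + 1 := kk_le_insert Y s(x,y)
        omega

lemma kk_supermodular (A B : Finset (Sym2 V)) :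
    kk A + kk B ≤ kk (A ∩ B) + kk (A ∪ B) := by
  classical
  have main : ∀ (D X Y : Finset (Sym2 V)), X ⊆ Y → kk Y + kk (X ∪ D) ≤ kk X + kk (Y ∪ D) := by
    intro D
    induction D using Finset.induction with
    | empty => intro X Y h; simp only [Finset.union_empty]; omega
    | @insert e D he ih =>
        intro X Y hXY
        have h1 : X ∪ insert e D = insert e (X ∪ D) := Finset.union_insert e X D
        have h2 : Y ∪ insert e D = insert e (Y ∪ D) := Finset.union_insert e Y D
        rw [h1, h2]
        have h3 := ih X Y hXY
        have h4 := kk_step (X := X ∪ D) (Y := Y ∪ D) (Finset.union_subset_union hXY le_rfl) e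
        omega
  have := main B (A ∩ B) A (Finset.inter_subset_left)
  rw [show A ∩ B ∪ B = B by ext a; simp] at this
  omega

-- ### expansion machinery
variable {q : ℕ} [NeZero q] (f : Fin q → ℂ)

open Classical in
/-- `|R ∩ C|`. -/
noncomputable def mcnt (A : Finset (Sym2 V)) (R : Finset V) (C : comps A) : ℕ :=
  (R.filter (fun v => cmk A v = C)).card

/-- real value of `∑ x, f x ^ m` -/
noncomputable def sA (m : ℕ) : ℝ := (∑ x : Fin q, f x ^ m).re

open Classical in
noncomputable def NRS (A : Finset (Sym2 V)) (R S : Finset V) : ℝ :=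
  ∏ C : comps A, sA f (mcnt A R C + mcnt A S C)

lemma delta_prod (A : Finset (Sym2 V)) (σ : V → Fin q) :
    (∏ e ∈ A, edgeDelta σ e) = if (∀ v w : V, s(v,w) ∈ A → σ v = σ w) then 1 else 0 := by
  split_ifs with h
  · refine Finset.prod_eq_one fun e he => ?_
    induction e using Sym2.ind with
    | _ x y => simpa [edgeDelta] using h x y he
  · push_neg at h
    obtain ⟨v, w, hmem, hne⟩ := h
    exact Finset.prod_eq_zero hmem (by simp [edgeDelta, hne])

lemma expansion (A : Finset (Sym2 V)) (R S : Finset V) :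
    ∑ σ : V → Fin q, ((∏ e ∈ A, edgeDelta σ e : ℝ) : ℂ) *
        ((∏ v ∈ R, f (σ v)) * ∏ v ∈ S, f (σ v)) =
      ∏ C : comps A, ∑ x : Fin q, f x ^ (mcnt A R C + mcnt A S C) := by
  classical
  have step1 : ∀ σ : V → Fin q, ((∏ e ∈ A, edgeDelta σ e : ℝ) : ℂ) *
        ((∏ v ∈ R, f (σ v)) * ∏ v ∈ S, f (σ v)) =
      if (∀ v w : V, s(v,w) ∈ A → σ v = σ w) then
        ((∏ v ∈ R, f (σ v)) * ∏ v ∈ S, f (σ v)) else 0 := by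
    intro σ; rw [delta_prod]; split_ifs <;> simp
  rw [Finset.sum_congr rfl fun σ _ => step1 σ, ← Finset.sum_filter]
  -- reindex by colorings of components
  rw [show (Finset.univ.filter fun σ : V → Fin q => ∀ v w : V, s(v,w) ∈ A → σ v = σ w) =
      (Finset.univ.image fun c : comps A → Fin q => fun v => c (cmk A v)) from ?_]
  · rw [Finset.sum_image ?inj]
    case inj =>
      intro c _ c' _ h
      funext C
      have := congrFun h C.out
      simpa [cmk_out] using this
    have step2 : ∀ c : comps A → Fin q,
        ((∏ v ∈ R, f (c (cmk A v))) * ∏ v ∈ S, f (c (cmk A v))) =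
        ∏ C : comps A, f (c C) ^ (mcnt A R C + mcnt A S C) := by
      intro c
      have hR : (∏ v ∈ R, f (c (cmk A v))) = ∏ C : comps A, f (c C) ^ (mcnt A R C) := by
        rw [← Finset.prod_fiberwise' R (cmk A) (fun C => f (c C))]
        refine Finset.prod_congr rfl fun C _ => ?_
        rw [Finset.prod_const]
        congr 1
      have hS : (∏ v ∈ S, f (c (cmk A v))) = ∏ C : comps A, f (c C) ^ (mcnt A S C) := by
        rw [← Finset.prod_fiberwise' S (cmk A) (fun C => f (c C))]
        refine Finset.prod_congr rfl fun C _ => ?_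
        rw [Finset.prod_const]
        congr 1
      rw [hR, hS, ← Finset.prod_mul_distrib]
      exact Finset.prod_congr rfl fun C _ => (pow_add _ _ _).symm
    rw [Finset.sum_congr rfl fun c _ => step2 c]
    exact (Fintype.prod_sum fun C x => f x ^ (mcnt A R C + mcnt A S C)).symm
  · ext σ
    simp only [Finset.mem_filter, Finset.mem_univ, true_and, Finset.mem_image]
    constructor
    · intro h
      refine ⟨fun C => σ C.out, funext fun v => ?_⟩
      exact compat_of_cmk_eq h ((cmk_out A (cmk A v)).symm ▸ rfl : cmk A (cmk A v).out = cmk A v)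
    · rintro ⟨c, rfl⟩ v w hvw
      simp only []
      rw [cmk_eq_of_mem hvw]

section withF
variable (hf : memF q f)
include hf

lemma sA_eq (m : ℕ) : (∑ x : Fin q, f x ^ m) = (sA f m : ℂ) := by
  have hq : (q : ℂ) ≠ 0 := by exact_mod_cast Nat.cast_ne_zero.mpr (NeZero.ne q)
  have h1 : (∑ x : Fin q, f x ^ m) = powerMean q f m * q := by
    rw [powerMean, div_mul_cancel₀ _ hq]
  have him : (∑ x : Fin q, f x ^ m).im = 0 := by
    rw [h1]
    simp [Complex.mul_im, (hf.1 m).1]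
  exact Complex.ext rfl (by simp [him])

lemma sA_nonneg (m : ℕ) : 0 ≤ sA f m := by
  have h1 : (∑ x : Fin q, f x ^ m) = powerMean q f m * q := by
    rw [powerMean, div_mul_cancel₀]
    exact_mod_cast Nat.cast_ne_zero.mpr (NeZero.ne q)
  rw [sA, h1]
  have := (hf.1 m)
  simp only [Complex.mul_re, Complex.natCast_re, Complex.natCast_im, mul_zero, sub_zero]
  exact mul_nonneg this.2 (by positivity)

omit hf in
lemma sA_zero : sA f 0 = q := by
  simp [sA]

lemma sA_mul_le (m n : ℕ) : sA f m * sA f n ≤ q * sA f (m + n) := by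
  have hq : (0:ℝ) < q := by exact_mod_cast Nat.pos_of_ne_zero (NeZero.ne q)
  have h1 : ∀ k, sA f k = (powerMean q f k).re * q := by
    intro k
    have : (∑ x : Fin q, f x ^ k) = powerMean q f k * q := by
      rw [powerMean, div_mul_cancel₀]
      exact_mod_cast Nat.cast_ne_zero.mpr (NeZero.ne q)
    rw [sA, this]
    simp [Complex.mul_re]
  rw [h1, h1, h1]
  have h2 := hf.2 m n
  calc (powerMean q f m).re * q * ((powerMean q f n).re * q)
      = ((powerMean q f m).re * (powerMean q f n).re) * (q * q) := by ring
    _ ≤ (powerMean q f (m+n)).re * (q * q) := by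
        apply mul_le_mul_of_nonneg_right h2 (by positivity)
    _ = q * ((powerMean q f (m+n)).re * q) := by ring

lemma NRS_nonneg (A : Finset (Sym2 V)) (R S : Finset V) : 0 ≤ NRS f A R S :=
  Finset.prod_nonneg fun C _ => sA_nonneg f hf _

end withF

open Classical in
lemma mcnt_fiber {A B : Finset (Sym2 V)} (h : A ⊆ B) (R : Finset V) (D : comps B) :
    mcnt B R D = ∑ C ∈ Finset.univ.filter (fun C => compMap h C = D), mcnt A R C := by
  classical
  have hL : mcnt B R D = ∑ v ∈ R, if cmk B v = D then 1 else 0 := by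
    rw [mcnt, Finset.card_filter]
  rw [hL]
  have hR : ∀ C, mcnt A R C = ∑ v ∈ R, if cmk A v = C then 1 else 0 := fun C => by
    rw [mcnt, Finset.card_filter]
  rw [Finset.sum_congr rfl fun C _ => hR C, Finset.sum_comm]
  refine Finset.sum_congr rfl fun v _ => ?_
  rw [Finset.sum_ite_eq (Finset.univ.filter (fun C => compMap h C = D)) (cmk A v)
    (fun _ => (1:ℕ))]
  simp [compMap_cmk h]

lemma prod_sA_le (hf : memF q f) {ι : Type*} (T : Finset ι) (hT : T.Nonempty) (m : ι → ℕ) :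
    (∏ t ∈ T, sA f (m t)) * q ≤ sA f (∑ t ∈ T, m t) * q ^ T.card := by
  induction hT using Finset.Nonempty.cons_induction with
  | singleton a => simp
  | cons a T ha hT ih =>
      rw [Finset.prod_cons, Finset.sum_cons, Finset.card_cons]
      have hq : (0:ℝ) < q := by exact_mod_cast Nat.pos_of_ne_zero (NeZero.ne q)
      calc sA f (m a) * (∏ t ∈ T, sA f (m t)) * q
          = sA f (m a) * ((∏ t ∈ T, sA f (m t)) * q) := by ring
        _ ≤ sA f (m a) * (sA f (∑ t ∈ T, m t) * q ^ T.card) := by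
            exact mul_le_mul_of_nonneg_left ih (sA_nonneg f hf _)
        _ = (sA f (m a) * sA f (∑ t ∈ T, m t)) * q ^ T.card := by ring
        _ ≤ (q * sA f (m a + ∑ t ∈ T, m t)) * q ^ T.card := by
            exact mul_le_mul_of_nonneg_right (sA_mul_le f hf _ _) (by positivity)
        _ = sA f (m a + ∑ t ∈ T, m t) * q ^ (T.card + 1) := by ring

lemma NRS_mono (hf : memF q f) {A B : Finset (Sym2 V)} (h : A ⊆ B) (R S : Finset V) :
    NRS f A R S * (q:ℝ) ^ (kk B) ≤ NRS f B R S * (q:ℝ) ^ (kk A) := by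
  classical
  set φ := compMap h with hφ
  have hNA : NRS f A R S =
      ∏ D : comps B, ∏ C ∈ Finset.univ.filter (fun C => φ C = D),
        sA f (mcnt A R C + mcnt A S C) := by
    rw [NRS, Finset.prod_fiberwise Finset.univ φ (fun C => sA f (mcnt A R C + mcnt A S C))]
  have hkA : (q:ℝ) ^ (kk A) =
      ∏ D : comps B, (q:ℝ) ^ (Finset.univ.filter (fun C => φ C = D)).card := by
    rw [Finset.prod_pow_eq_pow_sum]
    congr 1
    calc kk A = (Finset.univ : Finset (comps A)).card := Finset.card_univ.symm
      _ = ∑ _C : comps A, 1 := Finset.card_eq_sum_ones _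
      _ = ∑ D : comps B, ∑ _C ∈ Finset.univ.filter (fun C => φ C = D), 1 :=
          (Finset.sum_fiberwise Finset.univ φ (fun _ => (1:ℕ))).symm
      _ = ∑ D : comps B, (Finset.univ.filter (fun C => φ C = D)).card :=
          Finset.sum_congr rfl fun D _ => (Finset.card_eq_sum_ones _).symm
  have hkB : (q:ℝ) ^ (kk B) = ∏ _D : comps B, (q:ℝ) := by
    rw [Finset.prod_const, Finset.card_univ]
    rfl
  rw [hNA, hkA, hkB, NRS, ← Finset.prod_mul_distrib, ← Finset.prod_mul_distrib]
  refine Finset.prod_le_prod (fun D _ => ?_) (fun D _ => ?_)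
  · have hq : (0:ℝ) ≤ q := by positivity
    exact mul_nonneg (Finset.prod_nonneg fun C _ => sA_nonneg f hf _) hq
  · have hfib : (Finset.univ.filter (fun C => φ C = D)).Nonempty := by
      obtain ⟨C, hC⟩ := compMap_surjective h D
      exact ⟨C, by simp [hφ ▸ hC]⟩
    have hsum : mcnt B R D + mcnt B S D =
        ∑ C ∈ Finset.univ.filter (fun C => φ C = D), (mcnt A R C + mcnt A S C) := by
      rw [Finset.sum_add_distrib, ← mcnt_fiber h R D, ← mcnt_fiber h S D]
    rw [hsum]
    exact prod_sA_le f hf _ hfib _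



-- ### Potts plumbing
noncomputable def wJ (J : Sym2 V → ℝ) (A : Finset (Sym2 V)) : ℝ :=
  ∏ e ∈ A, (Real.exp (J e) - 1)

noncomputable def NumJ (f : Fin q → ℂ) (E : Finset (Sym2 V)) (J : Sym2 V → ℝ)
    (R S : Finset V) : ℝ :=
  ∑ A ∈ E.powerset, wJ J A * NRS f A R S

lemma edgeDelta_zero_or_one {q : ℕ} (σ : V → Fin q) (e : Sym2 V) :
    edgeDelta σ e = 0 ∨ edgeDelta σ e = 1 := by
  induction e using Sym2.ind with
  | _ x y =>
    by_cases h : σ x = σ y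
    · right; simp [edgeDelta, h]
    · left; simp [edgeDelta, h]

lemma weight_expand (E : Finset (Sym2 V)) (J : Sym2 V → ℝ) (σ : V → Fin q) :
    pottsWeight q E J (fun _ => 0) σ =
      ∑ A ∈ E.powerset, wJ J A * ∏ e ∈ A, edgeDelta σ e := by
  have h0 : pottsWeight q E J (fun _ => 0) σ = ∏ e ∈ E, Real.exp (J e * edgeDelta σ e) := by
    rw [pottsWeight]
    simp only [zero_mul, Finset.sum_const_zero, add_zero]
    rw [Real.exp_sum]
  have h1 : ∀ e ∈ E, Real.exp (J e * edgeDelta σ e)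
      = (Real.exp (J e) - 1) * edgeDelta σ e + 1 := by
    intro e _
    rcases edgeDelta_zero_or_one σ e with h | h <;> simp [h]
  rw [h0, Finset.prod_congr rfl h1, Finset.prod_add]
  refine Finset.sum_congr rfl fun A hA => ?_
  rw [Finset.prod_mul_distrib]
  simp [wJ, mul_comm]

lemma Z_pos (E : Finset (Sym2 V)) (J : Sym2 V → ℝ) :
    0 < pottsZ q E J (fun _ => 0) := by
  haveI : Nonempty (Fin q) := ⟨⟨0, Nat.pos_of_ne_zero (NeZero.ne q)⟩⟩
  exact Finset.sum_pos (fun σ _ => Real.exp_pos _) Finset.univ_nonempty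

section hfsec
variable (hf : memF q f)
include hf

lemma expansion' (A : Finset (Sym2 V)) (R S : Finset V) :
    ∑ σ : V → Fin q, (∏ e ∈ A, ((edgeDelta σ e : ℝ) : ℂ)) *
        ((∏ v ∈ R, f (σ v)) * ∏ v ∈ S, f (σ v)) = ((NRS f A R S : ℝ) : ℂ) := by
  have h0 : ∀ σ : V → Fin q, (∏ e ∈ A, ((edgeDelta σ e : ℝ) : ℂ)) =
      ((∏ e ∈ A, edgeDelta σ e : ℝ) : ℂ) := fun σ => by push_cast; rfl
  rw [Finset.sum_congr rfl fun σ _ => by rw [h0 σ], expansion f A R S, NRS]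
  push_cast
  exact Finset.prod_congr rfl fun C _ => sA_eq f hf _

lemma num_eq (E : Finset (Sym2 V)) (J : Sym2 V → ℝ) (R S : Finset V) :
    ∑ σ : V → Fin q, ((pottsWeight q E J (fun _ => 0) σ : ℝ) : ℂ) *
        ((∏ v ∈ R, f (σ v)) * ∏ v ∈ S, f (σ v)) = ((NumJ f E J R S : ℝ) : ℂ) := by
  have h1 : ∀ σ : V → Fin q, ((pottsWeight q E J (fun _ => 0) σ : ℝ) : ℂ) *
        ((∏ v ∈ R, f (σ v)) * ∏ v ∈ S, f (σ v)) =
      ∑ A ∈ E.powerset, ((wJ J A : ℝ) : ℂ) * (((∏ e ∈ A, edgeDelta σ e : ℝ) : ℂ) *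
        ((∏ v ∈ R, f (σ v)) * ∏ v ∈ S, f (σ v))) := by
    intro σ
    rw [weight_expand E J σ]
    push_cast
    rw [Finset.sum_mul]
    exact Finset.sum_congr rfl fun A _ => by ring
  rw [Finset.sum_congr rfl fun σ _ => h1 σ, Finset.sum_comm]
  rw [NumJ]
  push_cast
  refine Finset.sum_congr rfl fun A _ => ?_
  rw [← Finset.mul_sum, expansion' f hf A R S]

lemma Z_eq (E : Finset (Sym2 V)) (J : Sym2 V → ℝ) :
    pottsZ q E J (fun _ => 0) = NumJ f E J ∅ ∅ := by
  have := num_eq f hf E J ∅ ∅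
  simp only [Finset.prod_empty, mul_one] at this
  have h2 : ((pottsZ q E J (fun _ => 0) : ℝ) : ℂ) = ((NumJ f E J ∅ ∅ : ℝ) : ℂ) := by
    rw [pottsZ]
    push_cast
    exact this
  exact_mod_cast h2

lemma mean_eq (E : Finset (Sym2 V)) (J : Sym2 V → ℝ) (R : Finset V) :
    pottsMean q E J (fun _ => 0) f R =
      ((NumJ f E J R ∅ / NumJ f E J ∅ ∅ : ℝ) : ℂ) := by
  have hZ := Z_pos (V := V) (q := q) E J
  rw [pottsMean]
  have h1 : ∀ σ : V → Fin q, ((pottsPMF q E J (fun _ => 0) σ : ℝ) : ℂ) * ∏ v ∈ R, f (σ v) =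
      ((pottsZ q E J (fun _ => 0) : ℝ) : ℂ)⁻¹ *
        (((pottsWeight q E J (fun _ => 0) σ : ℝ) : ℂ) *
          ((∏ v ∈ R, f (σ v)) * ∏ v ∈ ∅, f (σ v))) := by
    intro σ
    rw [pottsPMF]
    push_cast
    rw [div_eq_inv_mul]
    simp [mul_assoc]
  rw [Finset.sum_congr rfl fun σ _ => h1 σ, ← Finset.mul_sum, num_eq f hf E J R ∅,
    Z_eq f hf E J, div_eq_inv_mul]
  push_cast
  ring

lemma mean2_eq (E : Finset (Sym2 V)) (J : Sym2 V → ℝ) (R S : Finset V) :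
    pottsMean2 q E J (fun _ => 0) f f R S =
      ((NumJ f E J R S / NumJ f E J ∅ ∅ : ℝ) : ℂ) := by
  have hZ := Z_pos (V := V) (q := q) E J
  rw [pottsMean2]
  have h1 : ∀ σ : V → Fin q, ((pottsPMF q E J (fun _ => 0) σ : ℝ) : ℂ) *
      ((∏ v ∈ R, f (σ v)) * ∏ v ∈ S, f (σ v)) =
      ((pottsZ q E J (fun _ => 0) : ℝ) : ℂ)⁻¹ *
        (((pottsWeight q E J (fun _ => 0) σ : ℝ) : ℂ) *
          ((∏ v ∈ R, f (σ v)) * ∏ v ∈ S, f (σ v))) := by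
    intro σ
    rw [pottsPMF]
    push_cast
    rw [div_eq_inv_mul]
    ring
  rw [Finset.sum_congr rfl fun σ _ => h1 σ, ← Finset.mul_sum, num_eq f hf E J R S,
    Z_eq f hf E J, div_eq_inv_mul]
  push_cast
  ring

end hfsec


-- ### lattice transfer & final lemmas
lemma NRS_empty (A : Finset (Sym2 V)) : NRS f A ∅ ∅ = (q:ℝ) ^ (kk A) := by
  classical
  rw [NRS]
  have h : ∀ C : comps A, mcnt A ∅ C + mcnt A ∅ C = 0 := by
    intro C; rw [mcnt]; simp
  rw [Finset.prod_congr rfl fun C _ => by rw [h C, sA_zero]]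
  rw [Finset.prod_const, Finset.card_univ]
  rfl

lemma NRS_mul_le (hf : memF q f) (A : Finset (Sym2 V)) (R S : Finset V) :
    NRS f A R ∅ * NRS f A S ∅ ≤ (q:ℝ) ^ (kk A) * NRS f A R S := by
  classical
  have hm : ∀ (T : Finset V) (C : comps A), mcnt A T C + mcnt A ∅ C = mcnt A T C := by
    intro T C
    have : mcnt A ∅ C = 0 := by simp [mcnt]
    rw [this, add_zero]
  have hq : (q:ℝ) ^ (kk A) = ∏ _C : comps A, (q:ℝ) := by
    rw [Finset.prod_const, Finset.card_univ]; rfl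
  rw [NRS, NRS, NRS, hq, ← Finset.prod_mul_distrib, ← Finset.prod_mul_distrib]
  refine Finset.prod_le_prod (fun C _ => mul_nonneg (sA_nonneg f hf _) (sA_nonneg f hf _))
    (fun C _ => ?_)
  rw [hm R C, hm S C]
  exact sA_mul_le f hf _ _

section latticeE
variable (E : Finset (Sym2 V))

noncomputable def ME (a : Finset {e : Sym2 V // e ∈ E}) : Finset (Sym2 V) :=
  a.map (Function.Embedding.subtype _)

lemma ME_subset (a : Finset {e : Sym2 V // e ∈ E}) : ME E a ⊆ E := by
  intro x hx
  rw [ME, Finset.mem_map] at hx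
  obtain ⟨⟨e, he⟩, _, rfl⟩ := hx
  exact he

lemma ME_sup (a b : Finset {e : Sym2 V // e ∈ E}) : ME E (a ⊔ b) = ME E a ∪ ME E b :=
  Finset.map_union a b

lemma ME_inf (a b : Finset {e : Sym2 V // e ∈ E}) : ME E (a ⊓ b) = ME E a ∩ ME E b :=
  Finset.map_inter a b

lemma ME_mono {a b : Finset {e : Sym2 V // e ∈ E}} (h : a ≤ b) : ME E a ⊆ ME E b :=
  Finset.map_subset_map.mpr h

lemma sum_powerset_eq (F : Finset (Sym2 V) → ℝ) :
    ∑ A ∈ E.powerset, F A = ∑ a : Finset {e : Sym2 V // e ∈ E}, F (ME E a) := by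
  classical
  refine (Finset.sum_bij' (fun a _ => ME E a)
    (fun A _ => A.subtype (· ∈ E))
    (fun a _ => Finset.mem_powerset.mpr (ME_subset E _))
    (fun A hA => Finset.mem_univ _) ?_ ?_ ?_).symm
  · intro a _
    ext ⟨e, he⟩
    simp only [ME, Finset.mem_subtype, Finset.mem_map, Function.Embedding.coe_subtype]
    constructor
    · rintro ⟨⟨x, hxE⟩, hmem, hxe⟩
      cases hxe
      exact hmem
    · intro h
      exact ⟨⟨e, he⟩, h, rfl⟩
  · intro A hA
    exact Finset.subtype_map_of_mem (fun x hx => Finset.mem_powerset.mp hA hx)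
  · intro a _
    rfl

end latticeE

lemma wJ_nonneg {J : Sym2 V → ℝ} {E A : Finset (Sym2 V)} (hJ : ∀ e ∈ E, 0 ≤ J e)
    (hA : A ⊆ E) : 0 ≤ wJ J A :=
  Finset.prod_nonneg fun e he => by
    have := Real.one_le_exp (hJ e (hA he))
    linarith

lemma wJ_pair_le {J J' : Sym2 V → ℝ} {E : Finset (Sym2 V)} (hJ : ∀ e ∈ E, 0 ≤ J e)
    (hJ' : ∀ e ∈ E, 0 ≤ J' e) (hle : ∀ e ∈ E, J e ≤ J' e)
    {A B : Finset (Sym2 V)} (hA : A ⊆ E) (hB : B ⊆ E) :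
    wJ J A * wJ J' B ≤ wJ J (A ∩ B) * wJ J' (A ∪ B) := by
  classical
  have hdAB : Disjoint (A ∩ B) (A \ B) := by
    rw [Finset.disjoint_left]
    intro x hx hx'
    exact (Finset.mem_sdiff.mp hx').2 (Finset.mem_inter.mp hx).2
  have hdB : Disjoint B (A \ B) := Finset.disjoint_sdiff
  have h1 : wJ J A = wJ J (A ∩ B) * wJ J (A \ B) := by
    rw [wJ, wJ, wJ, ← Finset.prod_union hdAB]
    congr 1
    ext x
    simp only [Finset.mem_union, Finset.mem_inter, Finset.mem_sdiff]
    tauto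
  have h2 : wJ J' (A ∪ B) = wJ J' B * wJ J' (A \ B) := by
    rw [wJ, wJ, wJ, ← Finset.prod_union hdB]
    congr 1
    ext x
    simp only [Finset.mem_union, Finset.mem_sdiff]
    tauto
  rw [h1, h2]
  have h3 : wJ J (A \ B) ≤ wJ J' (A \ B) := by
    refine Finset.prod_le_prod (fun e he => ?_) (fun e he => ?_)
    · have := Real.one_le_exp (hJ e (hA (Finset.mem_sdiff.mp he).1)); linarith
    · have := Real.exp_le_exp.mpr (hle e (hA (Finset.mem_sdiff.mp he).1)); linarith
  calc wJ J (A ∩ B) * wJ J (A \ B) * wJ J' B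
      = (wJ J (A ∩ B) * wJ J' B) * wJ J (A \ B) := by ring
    _ ≤ (wJ J (A ∩ B) * wJ J' B) * wJ J' (A \ B) := by
        refine mul_le_mul_of_nonneg_left h3 (mul_nonneg ?_ ?_)
        · exact wJ_nonneg hJ (fun x hx => hA (Finset.mem_inter.mp hx).1)
        · exact wJ_nonneg hJ' hB
    _ = wJ J (A ∩ B) * (wJ J' B * wJ J' (A \ B)) := by ring

lemma ZA_supermodular (A B : Finset (Sym2 V)) :
    (q:ℝ) ^ (kk A) * (q:ℝ) ^ (kk B) ≤ (q:ℝ) ^ (kk (A ∩ B)) * (q:ℝ) ^ (kk (A ∪ B)) := by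
  rw [← pow_add, ← pow_add]
  have hq : (1:ℝ) ≤ q := by exact_mod_cast Nat.one_le_iff_ne_zero.mpr (NeZero.ne q)
  exact pow_le_pow_right₀ hq (kk_supermodular A B)


-- ### main inequalities
lemma NumJ_sum (f : Fin q → ℂ) (E : Finset (Sym2 V)) (J : Sym2 V → ℝ) (R S : Finset V) :
    NumJ f E J R S = ∑ a : Finset {e : Sym2 V // e ∈ E}, wJ J (ME E a) * NRS f (ME E a) R S :=
  sum_powerset_eq E _

lemma NumJ_nonneg (hf : memF q f) {E : Finset (Sym2 V)} {J : Sym2 V → ℝ}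
    (hJ : ∀ e ∈ E, 0 ≤ J e) (R S : Finset V) : 0 ≤ NumJ f E J R S :=
  Finset.sum_nonneg fun A hA =>
    mul_nonneg (wJ_nonneg hJ (Finset.mem_powerset.mp hA)) (NRS_nonneg f hf A R S)

lemma qk_pos (A : Finset (Sym2 V)) : (0:ℝ) < (q:ℝ) ^ (kk A) := by
  have : (0:ℝ) < q := by exact_mod_cast Nat.pos_of_ne_zero (NeZero.ne q)
  positivity

lemma monotone_main (hf : memF q f) {E : Finset (Sym2 V)} {J J' : Sym2 V → ℝ}
    (hJ : ∀ e ∈ E, 0 ≤ J e) (hJ' : ∀ e ∈ E, 0 ≤ J' e) (hle : ∀ e ∈ E, J e ≤ J' e)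
    (R : Finset V) :
    NumJ f E J R ∅ / NumJ f E J ∅ ∅ ≤ NumJ f E J' R ∅ / NumJ f E J' ∅ ∅ := by
  classical
  have hZ : 0 < NumJ f E J ∅ ∅ := by
    rw [← Z_eq f hf E J]; exact Z_pos E J
  have hZ' : 0 < NumJ f E J' ∅ ∅ := by
    rw [← Z_eq f hf E J']; exact Z_pos E J'
  set Z := NumJ f E J ∅ ∅
  set Z' := NumJ f E J' ∅ ∅
  set μ : Finset {e : Sym2 V // e ∈ E} → ℝ :=
    fun a => NRS f (ME E a) R ∅ / (q:ℝ) ^ (kk (ME E a)) with hμdef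
  set fh : Finset {e : Sym2 V // e ∈ E} → ℝ :=
    fun a => wJ J (ME E a) * (q:ℝ) ^ (kk (ME E a)) / Z with hfhdef
  set gh : Finset {e : Sym2 V // e ∈ E} → ℝ :=
    fun a => wJ J' (ME E a) * (q:ℝ) ^ (kk (ME E a)) / Z' with hghdef
  have hμ0 : (0:Finset {e : Sym2 V // e ∈ E} → ℝ) ≤ μ := fun a =>
    div_nonneg (NRS_nonneg f hf _ _ _) (qk_pos _).le
  have hfh0 : (0:Finset {e : Sym2 V // e ∈ E} → ℝ) ≤ fh := fun a =>
    div_nonneg (mul_nonneg (wJ_nonneg hJ (ME_subset E a)) (qk_pos _).le) hZ.le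
  have hgh0 : (0:Finset {e : Sym2 V // e ∈ E} → ℝ) ≤ gh := fun a =>
    div_nonneg (mul_nonneg (wJ_nonneg hJ' (ME_subset E a)) (qk_pos _).le) hZ'.le
  have hμmono : Monotone μ := by
    intro a b hab
    rw [hμdef]
    dsimp only
    rw [div_le_div_iff₀ (qk_pos _) (qk_pos _)]
    exact NRS_mono f hf (ME_mono E hab) R ∅
  have hsums : ∀ (K : Sym2 V → ℝ),
      ∑ a : Finset {e : Sym2 V // e ∈ E}, wJ K (ME E a) * (q:ℝ) ^ (kk (ME E a))
        = NumJ f E K ∅ ∅ := by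
    intro K
    rw [NumJ_sum f E K ∅ ∅]
    exact Finset.sum_congr rfl fun a _ => by rw [NRS_empty]
  have hfg : ∑ a, fh a = ∑ a, gh a := by
    rw [hfhdef, hghdef]
    simp only
    rw [← Finset.sum_div, ← Finset.sum_div, hsums J, hsums J',
      div_self hZ.ne', div_self hZ'.ne']
  have hcond : ∀ a b, fh a * gh b ≤ fh (a ⊓ b) * gh (a ⊔ b) := by
    intro a b
    have hA := ME_subset E a
    have hB := ME_subset E b
    have hIn : ME E a ∩ ME E b ⊆ E := fun x hx => hA (Finset.mem_inter.mp hx).1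
    have hUn : ME E a ∪ ME E b ⊆ E := fun x hx =>
      (Finset.mem_union.mp hx).elim (fun h => hA h) (fun h => hB h)
    have hw := wJ_pair_le hJ hJ' hle hA hB
    have hk := ZA_supermodular (q := q) (ME E a) (ME E b)
    have hnum : wJ J (ME E a) * (q:ℝ) ^ kk (ME E a) * (wJ J' (ME E b) * (q:ℝ) ^ kk (ME E b)) ≤
        wJ J (ME E a ∩ ME E b) * (q:ℝ) ^ kk (ME E a ∩ ME E b) *
          (wJ J' (ME E a ∪ ME E b) * (q:ℝ) ^ kk (ME E a ∪ ME E b)) := by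
      calc wJ J (ME E a) * (q:ℝ) ^ kk (ME E a) * (wJ J' (ME E b) * (q:ℝ) ^ kk (ME E b))
          = (wJ J (ME E a) * wJ J' (ME E b)) * ((q:ℝ) ^ kk (ME E a) * (q:ℝ) ^ kk (ME E b)) := by
            ring
        _ ≤ (wJ J (ME E a ∩ ME E b) * wJ J' (ME E a ∪ ME E b)) *
              ((q:ℝ) ^ kk (ME E a ∩ ME E b) * (q:ℝ) ^ kk (ME E a ∪ ME E b)) :=
            mul_le_mul hw hk (by positivity)
              (mul_nonneg (wJ_nonneg hJ hIn) (wJ_nonneg hJ' hUn))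
        _ = _ := by ring
    rw [hfhdef, hghdef]
    dsimp only
    rw [div_mul_div_comm, div_mul_div_comm, ME_inf, ME_sup,
      div_le_div_iff₀ (by positivity) (by positivity)]
    exact mul_le_mul_of_nonneg_right hnum (by positivity)
  have key := holley (f := fh) (g := gh) (μ := μ) hμ0 hfh0 hgh0 hμmono hfg hcond
  have hL : ∑ a, μ a * fh a = NumJ f E J R ∅ / Z := by
    rw [NumJ_sum f E J R ∅, Finset.sum_div]
    refine Finset.sum_congr rfl fun a _ => ?_
    rw [hμdef, hfhdef]
    dsimp only
    have hqk := qk_pos (q := q) (ME E a)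
    have hq0 : (q:ℝ) ≠ 0 := by exact_mod_cast Nat.cast_ne_zero.mpr (NeZero.ne q)
    field_simp [hqk.ne']
  have hR : ∑ a, μ a * gh a = NumJ f E J' R ∅ / Z' := by
    rw [NumJ_sum f E J' R ∅, Finset.sum_div]
    refine Finset.sum_congr rfl fun a _ => ?_
    rw [hμdef, hghdef]
    dsimp only
    have hqk := qk_pos (q := q) (ME E a)
    have hq0 : (q:ℝ) ≠ 0 := by exact_mod_cast Nat.cast_ne_zero.mpr (NeZero.ne q)
    field_simp [hqk.ne']
  rw [← hL, ← hR]
  exact key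

lemma gks_main (hf : memF q f) {E : Finset (Sym2 V)} {J : Sym2 V → ℝ}
    (hJ : ∀ e ∈ E, 0 ≤ J e) (R S : Finset V) :
    NumJ f E J R ∅ * NumJ f E J S ∅ ≤ NumJ f E J ∅ ∅ * NumJ f E J R S := by
  classical
  set μ : Finset {e : Sym2 V // e ∈ E} → ℝ :=
    fun a => wJ J (ME E a) * (q:ℝ) ^ (kk (ME E a)) with hμdef
  set F : Finset {e : Sym2 V // e ∈ E} → ℝ :=
    fun a => NRS f (ME E a) R ∅ / (q:ℝ) ^ (kk (ME E a)) with hFdef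
  set G : Finset {e : Sym2 V // e ∈ E} → ℝ :=
    fun a => NRS f (ME E a) S ∅ / (q:ℝ) ^ (kk (ME E a)) with hGdef
  have hμ0 : (0:Finset {e : Sym2 V // e ∈ E} → ℝ) ≤ μ := fun a =>
    mul_nonneg (wJ_nonneg hJ (ME_subset E a)) (qk_pos _).le
  have hF0 : (0:Finset {e : Sym2 V // e ∈ E} → ℝ) ≤ F := fun a =>
    div_nonneg (NRS_nonneg f hf _ _ _) (qk_pos _).le
  have hG0 : (0:Finset {e : Sym2 V // e ∈ E} → ℝ) ≤ G := fun a =>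
    div_nonneg (NRS_nonneg f hf _ _ _) (qk_pos _).le
  have hFmono : Monotone F := by
    intro a b hab
    rw [hFdef]
    dsimp only
    rw [div_le_div_iff₀ (qk_pos _) (qk_pos _)]
    exact NRS_mono f hf (ME_mono E hab) R ∅
  have hGmono : Monotone G := by
    intro a b hab
    rw [hGdef]
    dsimp only
    rw [div_le_div_iff₀ (qk_pos _) (qk_pos _)]
    exact NRS_mono f hf (ME_mono E hab) S ∅
  have hμcond : ∀ a b, μ a * μ b ≤ μ (a ⊓ b) * μ (a ⊔ b) := by
    intro a b
    have hA := ME_subset E a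
    have hB := ME_subset E b
    have hIn : ME E a ∩ ME E b ⊆ E := fun x hx => hA (Finset.mem_inter.mp hx).1
    have hUn : ME E a ∪ ME E b ⊆ E := fun x hx =>
      (Finset.mem_union.mp hx).elim (fun h => hA h) (fun h => hB h)
    have hw := wJ_pair_le hJ hJ (fun e _ => le_rfl) hA hB
    have hk := ZA_supermodular (q := q) (ME E a) (ME E b)
    rw [hμdef]
    dsimp only
    rw [ME_inf, ME_sup]
    calc wJ J (ME E a) * (q:ℝ) ^ kk (ME E a) * (wJ J (ME E b) * (q:ℝ) ^ kk (ME E b))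
        = (wJ J (ME E a) * wJ J (ME E b)) * ((q:ℝ) ^ kk (ME E a) * (q:ℝ) ^ kk (ME E b)) := by
          ring
      _ ≤ (wJ J (ME E a ∩ ME E b) * wJ J (ME E a ∪ ME E b)) *
            ((q:ℝ) ^ kk (ME E a ∩ ME E b) * (q:ℝ) ^ kk (ME E a ∪ ME E b)) :=
          mul_le_mul hw hk (by positivity)
            (mul_nonneg (wJ_nonneg hJ hIn) (wJ_nonneg hJ hUn))
      _ = _ := by ring
  have key := fkg (f := F) (g := G) (μ := μ) hμ0 hF0 hG0 hFmono hGmono hμcond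
  have h1 : ∑ a, μ a * F a = NumJ f E J R ∅ := by
    rw [NumJ_sum f E J R ∅]
    refine Finset.sum_congr rfl fun a _ => ?_
    rw [hμdef, hFdef]
    dsimp only
    have hqk := qk_pos (q := q) (ME E a)
    field_simp [hqk.ne']
  have h2 : ∑ a, μ a * G a = NumJ f E J S ∅ := by
    rw [NumJ_sum f E J S ∅]
    refine Finset.sum_congr rfl fun a _ => ?_
    rw [hμdef, hGdef]
    dsimp only
    have hqk := qk_pos (q := q) (ME E a)
    field_simp [hqk.ne']
  have h3 : ∑ a, μ a = NumJ f E J ∅ ∅ := by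
    rw [NumJ_sum f E J ∅ ∅]
    exact Finset.sum_congr rfl fun a _ => by rw [NRS_empty]
  have h4 : ∑ a, μ a * (F a * G a) ≤ NumJ f E J R S := by
    rw [NumJ_sum f E J R S]
    refine Finset.sum_le_sum fun a _ => ?_
    rw [hμdef, hFdef, hGdef]
    dsimp only
    have hqk := qk_pos (q := q) (ME E a)
    have heq : wJ J (ME E a) * (q:ℝ) ^ kk (ME E a) *
        (NRS f (ME E a) R ∅ / (q:ℝ) ^ kk (ME E a) *
          (NRS f (ME E a) S ∅ / (q:ℝ) ^ kk (ME E a))) =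
        wJ J (ME E a) * ((NRS f (ME E a) R ∅ * NRS f (ME E a) S ∅) / (q:ℝ) ^ kk (ME E a)) := by
      field_simp
    rw [heq]
    refine mul_le_mul_of_nonneg_left ?_ (wJ_nonneg hJ (ME_subset E a))
    rw [div_le_iff₀ hqk]
    calc NRS f (ME E a) R ∅ * NRS f (ME E a) S ∅
        ≤ (q:ℝ) ^ (kk (ME E a)) * NRS f (ME E a) R S := NRS_mul_le f hf _ R S
      _ = NRS f (ME E a) R S * (q:ℝ) ^ (kk (ME E a)) := mul_comm _ _
  calc NumJ f E J R ∅ * NumJ f E J S ∅ = (∑ a, μ a * F a) * ∑ a, μ a * G a := by rw [h1, h2]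
    _ ≤ (∑ a, μ a) * ∑ a, μ a * (F a * G a) := key
    _ ≤ NumJ f E J ∅ ∅ * NumJ f E J R S := by
        refine mul_le_mul_of_nonneg_left h4 ?_ |>.trans_eq (by rw [h3])
        rw [h3]
        exact NumJ_nonneg f hf hJ ∅ ∅

/-- With zero external field it suffices that `f ∈ F_q`: the means `⟨f(σ)^R⟩` are real
and nonnegative, non-decreasing in `J`, and satisfy the GKS-type inequality. -/
theorem pottsMean_zero_field
    (q : ℕ) [NeZero q] (hq : 2 ≤ q)
    (E : Finset (Sym2 V)) (hE : ∀ e ∈ E, ¬ e.IsDiag)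
    (J : Sym2 V → ℝ) (hJ : ∀ e ∈ E, 0 ≤ J e)
    (f : Fin q → ℂ) (hf : memF q f) :
    (∀ R : Finset V,
      (pottsMean q E J (fun _ => 0) f R).im = 0 ∧
      0 ≤ (pottsMean q E J (fun _ => 0) f R).re) ∧
    (∀ (J' : Sym2 V → ℝ), (∀ e ∈ E, 0 ≤ J' e) → (∀ e ∈ E, J e ≤ J' e) →
      ∀ R : Finset V,
        (pottsMean q E J (fun _ => 0) f R).re ≤
          (pottsMean q E J' (fun _ => 0) f R).re) ∧
    (∀ R S : Finset V,
      (pottsMean q E J (fun _ => 0) f R).re * (pottsMean q E J (fun _ => 0) f S).re ≤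
        (pottsMean2 q E J (fun _ => 0) f f R S).re) := by
  have hZJ : ∀ (K : Sym2 V → ℝ), 0 < NumJ f E K ∅ ∅ := fun K => by
    rw [← Z_eq f hf E K]; exact Z_pos E K
  refine ⟨?_, ?_, ?_⟩
  · intro R
    rw [mean_eq f hf E J R]
    constructor
    · simp
    · simp only [Complex.ofReal_re]
      exact div_nonneg (NumJ_nonneg f hf hJ R ∅) (hZJ J).le
  · intro J' hJ'0 hJle R
    rw [mean_eq f hf E J R, mean_eq f hf E J' R]
    simp only [Complex.ofReal_re]
    exact monotone_main f hf hJ hJ'0 hJle R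
  · intro R S
    rw [mean_eq f hf E J R, mean_eq f hf E J S, mean2_eq f hf E J R S]
    simp only [Complex.ofReal_re]
    rw [div_mul_div_comm, div_le_div_iff₀ (mul_pos (hZJ J) (hZJ J)) (hZJ J)]
    have hg := gks_main f hf hJ R S
    nlinarith [hZJ J, NumJ_nonneg f hf hJ R S, NumJ_nonneg f hf hJ R ∅, NumJ_nonneg f hf hJ S ∅]
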